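/- Let τ be a permutation of a finite set I with exactly two cycles, and let π be a permutation of I noncrossing on τ that has at least one cycle meeting both cycles of τ, has no fixed points, and has no cycle containing both a and τ(a) for any a ∈ I. Then there exist a and b lying in different cycles of τ such that π = (a,b)(τ(a),τ⁻¹(b))(τ²(a),τ⁻²(b))⋯(τ⁻¹(a),τ(b)); in particular, the two cycles of τ have equal length and every cycle of π is a transposition joining the two cycles of τ. -/

import Mathlib

namespace AnnNC

/-- The orbit ("same cycle") setoid of a permutation. -/
def orbitSetoid {α : Type*} (σ : Equiv.Perm α) : Setoid α :=
  ⟨σ.SameCycle, ⟨fun x => Equiv.Perm.SameCycle.refl σ x,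
    fun h => h.symm, fun h h' => h.trans h'⟩⟩

/-- Number of orbits (cycles, counting fixed points) of a permutation. -/
noncomputable def numOrbits {α : Type*} (σ : Equiv.Perm α) : ℕ :=
  Nat.card (Quotient (orbitSetoid σ))

/-- Number of blocks of the join `Π(σ) ∨ Π(ρ)` of the orbit partitions. -/
noncomputable def numJoin {α : Type*} (σ ρ : Equiv.Perm α) : ℕ :=
  Nat.card (Quotient (orbitSetoid σ ⊔ orbitSetoid ρ))

/-- Euler characteristic `χ_ρ(π) = #(ρ) + #(π) + #(π⁻¹ρ) − n`. -/
noncomputable def euler {α : Type*} (ρ π : Equiv.Perm α) : ℤ :=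
  (numOrbits ρ : ℤ) + (numOrbits π : ℤ) + (numOrbits (π⁻¹ * ρ) : ℤ) - (Nat.card α : ℤ)

/-- `π` is noncrossing on `ρ`. -/
def IsNoncrossingOn {α : Type*} (π ρ : Equiv.Perm α) : Prop :=
  euler ρ π = 2 * (numJoin π ρ : ℤ)

/-- Euler characteristic of permutations regarded as permutations of a subset `S`
(for permutations fixing the complement of `S` pointwise). -/
noncomputable def eulerOn {α : Type*} (S : Set α) (ρ π : Equiv.Perm α) : ℤ :=
  ((numOrbits ρ : ℤ) - (Nat.card (Sᶜ : Set α) : ℤ)) +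
    ((numOrbits π : ℤ) - (Nat.card (Sᶜ : Set α) : ℤ)) +
    ((numOrbits (π⁻¹ * ρ) : ℤ) - (Nat.card (Sᶜ : Set α) : ℤ)) - (Nat.card (S : Set α) : ℤ)

/-- `π` is noncrossing on `ρ`, both regarded as permutations of the subset `S`. -/
def IsNoncrossingWithin {α : Type*} (S : Set α) (π ρ : Equiv.Perm α) : Prop :=
  eulerOn S ρ π = 2 * ((numJoin π ρ : ℤ) - (Nat.card (Sᶜ : Set α) : ℤ))

/-- `τ_{p,q} = (1,…,p)(p+1,…,p+q)` as a permutation of `Fin (p+q)`. -/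
def tauPQ (p q : ℕ) : Equiv.Perm (Fin (p + q)) :=
  Equiv.permCongr finSumFinEquiv (Equiv.sumCongr (finRotate p) (finRotate q))

/-- Disc-noncrossing permutations: noncrossing on `τ_{p,q}` and the orbit partition
refines that of `τ_{p,q}`. -/
def SDiscNC (p q : ℕ) : Set (Equiv.Perm (Fin (p + q))) :=
  {π | IsNoncrossingOn π (tauPQ p q) ∧
    ∀ x y : Fin (p + q), π.SameCycle x y → ((x : ℕ) < p ↔ (y : ℕ) < p)}

/-- Annular-noncrossing permutations: noncrossing on `τ_{p,q}` with at least one bridge. -/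
def SAnnNC (p q : ℕ) : Set (Equiv.Perm (Fin (p + q))) :=
  {π | IsNoncrossingOn π (tauPQ p q) ∧
    ∃ a b : Fin (p + q), π.SameCycle a b ∧ (a : ℕ) < p ∧ p ≤ (b : ℕ)}

/-- The set of elements lying in bridges of `σ`. -/
def BridgeSet (p q : ℕ) (σ : Equiv.Perm (Fin (p + q))) : Set (Fin (p + q)) :=
  {x | ∃ a b : Fin (p + q), σ.SameCycle x a ∧ σ.SameCycle x b ∧ (a : ℕ) < p ∧ p ≤ (b : ℕ)}

/-- `π₀` is the permutation induced by `π` on the partition `Π(τ_{p,q})`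
(the first–return map of `π` to each of the two sides). -/
def IsPiZero (p q : ℕ) (π π₀ : Equiv.Perm (Fin (p + q))) : Prop :=
  ∀ a : Fin (p + q), ∃ k : ℕ, 0 < k ∧ π₀ a = (π ^ k) a ∧
    (((a : ℕ) < p) ↔ (((π ^ k) a : ℕ) < p)) ∧
    ∀ j : ℕ, 0 < j → j < k → ¬ (((a : ℕ) < p) ↔ (((π ^ j) a : ℕ) < p))

/-- The order `π ⪯ ρ` for (unhatted) permutations: the orbit partition of `π` refines
that of `ρ` and `π` is noncrossing on `ρ`. -/
def permLe {α : Type*} (π ρ : Equiv.Perm α) : Prop :=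
  (∀ x y : α, π.SameCycle x y → ρ.SameCycle x y) ∧ IsNoncrossingOn π ρ

/-- The order relation `π ⪯ ρ̂` in `S_nc-sd(p,q)`, i.e. `Kr(ρ) ⪯ Kr(π)`. -/
def leAnnHat (p q : ℕ) (π ρ : Equiv.Perm (Fin (p + q))) : Prop :=
  permLe (ρ⁻¹ * tauPQ p q) (π⁻¹ * tauPQ p q)

/-- `σ` is the permutation induced by `π` on the subset `J` (first-return map),
extended by the identity off `J`. -/
def IsInducedOn {α : Type*} (π σ : Equiv.Perm α) (J : Set α) : Prop :=
  (∀ a ∉ J, σ a = a) ∧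
  ∀ a ∈ J, ∃ k : ℕ, 0 < k ∧ σ a = (π ^ k) a ∧ (π ^ k) a ∈ J ∧
    ∀ j : ℕ, 0 < j → j < k → (π ^ j) a ∉ J

/-- The size of an orbit of a permutation. -/
noncomputable def orbitSize {α : Type*} (σ : Equiv.Perm α) (c : Quotient (orbitSetoid σ)) : ℕ :=
  Nat.card {x : α // Quotient.mk (orbitSetoid σ) x = c}

/-- `∏_{U ∈ Π(σ)} (−1)^{|U|−1} C_{|U|−1}`. -/
noncomputable def catProd {α : Type*} (σ : Equiv.Perm α) : ℤ :=
  ∏ᶠ c : Quotient (orbitSetoid σ),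
    ((-1 : ℤ) ^ (orbitSize σ c - 1) * (catalan (orbitSize σ c - 1) : ℤ))

/-- The carrier of the poset `S_nc-sd(p,q)`: pairs (permutation, hatted?). -/
def NCSDSet (p q : ℕ) : Set (Equiv.Perm (Fin (p + q)) × Bool) :=
  {z | (z.2 = false ∧ (z.1 ∈ SDiscNC p q ∪ SAnnNC p q)) ∨ (z.2 = true ∧ z.1 ∈ SDiscNC p q)}

/-- The partial order of `S_nc-sd(p,q)`. -/
def ncsdLe (p q : ℕ) (a b : Equiv.Perm (Fin (p + q)) × Bool) : Prop :=
  (a.2 = false ∧ b.2 = false ∧ permLe a.1 b.1) ∨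
  (b.2 = true ∧ permLe (b.1⁻¹ * tauPQ p q) (a.1⁻¹ * tauPQ p q))

end AnnNC

section Helpers
open AnnNC Equiv

variable {α : Type*}

private lemma mk_eq_iff (σ : Equiv.Perm α) (x y : α) :
    Quotient.mk (orbitSetoid σ) x = Quotient.mk (orbitSetoid σ) y ↔ σ.SameCycle x y :=
  (Quotient.eq (r := orbitSetoid σ)).trans Iff.rfl

private lemma mk_apply (σ : Equiv.Perm α) (x : α) :
    Quotient.mk (orbitSetoid σ) (σ x) = Quotient.mk (orbitSetoid σ) x :=
  Quotient.sound ⟨-1, by simp⟩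

private lemma fpf_count [Finite α] (σ : Equiv.Perm α) (hfpf : ∀ x, σ x ≠ x) :
    2 * numOrbits σ ≤ Nat.card α ∧
      (2 * numOrbits σ = Nat.card α → ∀ x, σ (σ x) = x) := by
  classical
  haveI : Fintype α := Fintype.ofFinite α
  haveI : Fintype (Quotient (orbitSetoid σ)) := Fintype.ofFinite _
  set Q := Quotient (orbitSetoid σ)
  set f : Q → ℕ := fun c => Nat.card {x : α // Quotient.mk (orbitSetoid σ) x = c} with hf
  have hcard : Nat.card α = ∑ c : Q, f c := by
    rw [Nat.card_eq_fintype_card,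
      ← Fintype.card_congr (Equiv.sigmaFiberEquiv (Quotient.mk (orbitSetoid σ))),
      Fintype.card_sigma]
    exact Finset.sum_congr rfl fun c _ => (Nat.card_eq_fintype_card).symm
  have hge : ∀ c : Q, 2 ≤ f c := by
    intro c
    obtain ⟨x, rfl⟩ := c.exists_rep
    have : Nontrivial {y : α // Quotient.mk (orbitSetoid σ) y
        = Quotient.mk (orbitSetoid σ) x} :=
      ⟨⟨⟨x, rfl⟩, ⟨σ x, mk_apply σ x⟩, fun h => hfpf x (by
        simpa using congrArg Subtype.val h.symm)⟩⟩
    exact Finite.one_lt_card_iff_nontrivial.mpr this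
  have hle : 2 * numOrbits σ ≤ Nat.card α := by
    rw [hcard]
    calc 2 * numOrbits σ = ∑ _c : Q, 2 := by
          simp [numOrbits, Nat.card_eq_fintype_card, Finset.sum_const, mul_comm]
          exact Fintype.card_congr (Equiv.refl _)
      _ ≤ ∑ c : Q, f c := Finset.sum_le_sum fun c _ => hge c
  refine ⟨hle, fun heq x => ?_⟩
  -- all fibers have size exactly 2
  have hall : ∀ c : Q, f c = 2 := by
    by_contra h
    push_neg at h
    obtain ⟨c₀, hc₀⟩ := h
    have h2 : 2 < f c₀ := lt_of_le_of_ne (hge c₀) (Ne.symm hc₀)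
    have : (∑ _c : Q, 2) < ∑ c : Q, f c :=
      Finset.sum_lt_sum (fun c _ => hge c) ⟨c₀, Finset.mem_univ _, h2⟩
    rw [← hcard, ← heq] at this
    simp [numOrbits, Nat.card_eq_fintype_card, Finset.sum_const, mul_comm] at this
    have e := Fintype.card_congr (α := Q) (β := Quotient (orbitSetoid σ)) (Equiv.refl _)
    omega
  -- fiber over x has card 2; contains x, σ x, σ (σ x)
  set S := {y : α // Quotient.mk (orbitSetoid σ) y = Quotient.mk (orbitSetoid σ) x} with hS
  have h2 : Nat.card S = 2 := hall (Quotient.mk (orbitSetoid σ) x)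
  rw [Nat.card_eq_two_iff] at h2
  obtain ⟨u, v, huv, huniv⟩ := h2
  have hmem : ∀ z : S, z = u ∨ z = v := by
    intro z
    have : z ∈ ({u, v} : Set S) := by rw [huniv]; trivial
    simpa using this
  have ha : (⟨x, rfl⟩ : S) = u ∨ (⟨x, rfl⟩ : S) = v := hmem _
  have hbmk : Quotient.mk (orbitSetoid σ) (σ x) = Quotient.mk (orbitSetoid σ) x :=
    mk_apply σ x
  have hcmk : Quotient.mk (orbitSetoid σ) (σ (σ x)) = Quotient.mk (orbitSetoid σ) x := by
    rw [mk_apply σ (σ x), hbmk]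
  have hab : (⟨x, rfl⟩ : S) ≠ ⟨σ x, hbmk⟩ := fun h => hfpf x (by
    simpa using congrArg Subtype.val h.symm)
  have hbc : (⟨σ x, hbmk⟩ : S) ≠ ⟨σ (σ x), hcmk⟩ := fun h => hfpf (σ x) (by
    simpa using congrArg Subtype.val h.symm)
  have hb := hmem ⟨σ x, hbmk⟩
  have hc := hmem ⟨σ (σ x), hcmk⟩
  have hca : (⟨σ (σ x), hcmk⟩ : S) = ⟨x, rfl⟩ := by
    rcases ha with ha | ha <;> rcases hb with hb | hb <;> rcases hc with hc | hc <;>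
      first
        | (exact absurd (hb.trans ha.symm) (Ne.symm hab))
        | (exact absurd (hc.trans hb.symm) (Ne.symm hbc))
        | (rw [hc, ← ha])
  simpa using congrArg Subtype.val hca

end Helpers

section Helpers2
open AnnNC Equiv

variable {α : Type*}

private lemma numOrbits_eq_two [Finite α] (τ : Equiv.Perm α) (c₁ c₂ : α)
    (h12 : ¬ τ.SameCycle c₁ c₂) (hall : ∀ x, τ.SameCycle x c₁ ∨ τ.SameCycle x c₂) :
    numOrbits τ = 2 := by
  rw [numOrbits, Nat.card_eq_two_iff]
  refine ⟨Quotient.mk _ c₁, Quotient.mk _ c₂, ?_, ?_⟩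
  · intro h
    exact h12 ((mk_eq_iff τ c₁ c₂).mp h)
  · ext z
    simp only [Set.mem_insert_iff, Set.mem_singleton_iff, Set.mem_univ, iff_true]
    obtain ⟨x, rfl⟩ := z.exists_rep
    rcases hall x with h | h
    · exact Or.inl ((mk_eq_iff τ x c₁).mpr h)
    · exact Or.inr ((mk_eq_iff τ x c₂).mpr h)

private lemma numJoin_eq_one [Finite α] (π τ : Equiv.Perm α) (c₁ c₂ : α)
    (h12 : ¬ τ.SameCycle c₁ c₂) (hall : ∀ x, τ.SameCycle x c₁ ∨ τ.SameCycle x c₂)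
    (a b : α) (hab : π.SameCycle a b) (hnab : ¬ τ.SameCycle a b) :
    numJoin π τ = 1 := by
  rw [numJoin, Nat.card_eq_one_iff_unique]
  set J := orbitSetoid π ⊔ orbitSetoid τ with hJ
  have hπ : ∀ x y, π.SameCycle x y → J x y := fun x y h =>
    Setoid.le_def.mp (le_sup_left (a := orbitSetoid π) (b := orbitSetoid τ)) h
  have hτ : ∀ x y, τ.SameCycle x y → J x y := fun x y h =>
    Setoid.le_def.mp (le_sup_right (a := orbitSetoid π) (b := orbitSetoid τ)) h
  have hJ12 : J c₁ c₂ := by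
    rcases hall a with ha | ha <;> rcases hall b with hb | hb
    · exact absurd (ha.trans hb.symm) hnab
    · exact J.iseqv.trans (hτ c₁ a ha.symm)
        (J.iseqv.trans (hπ a b hab) (hτ b c₂ hb))
    · exact J.iseqv.trans (hτ c₁ b hb.symm)
        (J.iseqv.trans (hπ b a hab.symm) (hτ a c₂ ha))
    · exact absurd (ha.trans hb.symm) hnab
  have hJx : ∀ x, J x c₁ := by
    intro x
    rcases hall x with h | h
    · exact hτ _ _ h
    · exact J.iseqv.trans (hτ _ _ h) (J.iseqv.symm hJ12)
  constructor
  · refine ⟨fun z w => ?_⟩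
    obtain ⟨x, rfl⟩ := z.exists_rep
    obtain ⟨y, rfl⟩ := w.exists_rep
    exact Quotient.sound (J.iseqv.trans (hJx x) (J.iseqv.symm (hJx y)))
  · exact ⟨Quotient.mk J c₁⟩

end Helpers2


open AnnNC in
/-- if `τ` has exactly two cycles, and `π` is noncrossing on `τ`, has a cycle
meeting both cycles of `τ`, has no fixed points and no cycle containing both `a` and
`τ(a)`, then `π` is a "spoke diagram": there are `a`, `b` in different cycles of `τ` with
`π = (a,b)(τ(a),τ⁻¹(b))(τ²(a),τ⁻²(b))⋯(τ⁻¹(a),τ(b))`; in particular the two cycles of `τ`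
have equal length. -/
theorem stmt12 {α : Type*} [Finite α] (τ π : Equiv.Perm α)
    (hτ2 : ∃ c₁ c₂ : α, ¬ τ.SameCycle c₁ c₂ ∧ ∀ x : α, τ.SameCycle x c₁ ∨ τ.SameCycle x c₂)
    (hnc : IsNoncrossingOn π τ)
    (hbridge : ∃ a b : α, π.SameCycle a b ∧ ¬ τ.SameCycle a b)
    (hnofix : ∀ x : α, π x ≠ x)
    (hsep : ∀ a : α, ¬ π.SameCycle a (τ a)) :
    ∃ a b : α, ¬ τ.SameCycle a b ∧
      (∀ k : ℤ, π ((τ ^ k) a) = (τ ^ (-k)) b) ∧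
      (∀ k : ℤ, π ((τ ^ k) b) = (τ ^ (-k)) a) ∧
      Nat.card {x : α | τ.SameCycle a x} = Nat.card {x : α | τ.SameCycle b x} := by
  classical
  obtain ⟨c₁, c₂, h12, hall⟩ := hτ2
  obtain ⟨a₀, b₀, hab₀, hnab₀⟩ := hbridge
  have hτeq : numOrbits τ = 2 := numOrbits_eq_two τ c₁ c₂ h12 hall
  have hJeq : numJoin π τ = 1 := numJoin_eq_one π τ c₁ c₂ h12 hall a₀ b₀ hab₀ hnab₀
  have hρfpf : ∀ x, (π⁻¹ * τ) x ≠ x := by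
    intro x h
    have h' : τ x = π x := by
      have := congrArg π h
      simpa [Equiv.Perm.mul_apply] using this
    exact hsep x ⟨1, by simpa using h'.symm⟩
  obtain ⟨h1le, h1eq⟩ := fpf_count π hnofix
  obtain ⟨h2le, h2eq⟩ := fpf_count (π⁻¹ * τ) hρfpf
  have hsum : numOrbits π + numOrbits (π⁻¹ * τ) = Nat.card α := by
    have h := hnc
    rw [IsNoncrossingOn, euler, hτeq, hJeq] at h
    push_cast at h
    omega
  have hπ2 : ∀ x, π (π x) = x := h1eq (by omega)
  have hρ2 : ∀ x, (π⁻¹ * τ) ((π⁻¹ * τ) x) = x := h2eq (by omega)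
  have hπinv : π⁻¹ = π := by
    ext x
    calc π⁻¹ x = π⁻¹ (π (π x)) := by rw [hπ2]
      _ = π x := Equiv.symm_apply_apply π (π x)
  have hkey : ∀ x, π (τ x) = τ⁻¹ (π x) := by
    intro x
    have h := hρ2 (τ⁻¹ (π x))
    simp only [Equiv.Perm.mul_apply, hπinv] at h
    rw [show ∀ y, τ (τ⁻¹ y) = y from τ.apply_symm_apply, hπ2] at h
    exact h
  have hconj : π * τ * π⁻¹ = τ⁻¹ := by
    ext x
    simp only [Equiv.Perm.mul_apply, hπinv]
    rw [hkey (π x), hπ2]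
  have hzpow : ∀ k : ℤ, π * τ ^ k * π⁻¹ = τ ^ (-k) := by
    intro k
    rw [← conj_zpow, hconj, inv_zpow, zpow_neg]
  have hpt : ∀ (k : ℤ) (x : α), π ((τ ^ k) x) = (τ ^ (-k)) (π x) := by
    intro k x
    have h := congrArg (fun f : Equiv.Perm α => f (π x)) (hzpow k)
    simpa [Equiv.Perm.mul_apply, hπ2] using h
  -- b₀ = π a₀
  obtain ⟨k, hk⟩ := hab₀
  have hsq : π * π = 1 := by ext x; simp [Equiv.Perm.mul_apply, hπ2]
  have horder : ∀ m : ℤ, π ^ m = 1 ∨ π ^ m = π := by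
    intro m
    have h2 : π ^ (2 : ℤ) = 1 := by
      rw [show (2 : ℤ) = ((2 : ℕ) : ℤ) by norm_num, zpow_natCast, pow_two, hsq]
    have hm : π ^ m = π ^ (m % 2) := by
      conv_lhs => rw [← Int.emod_add_mul_ediv m 2]
      rw [zpow_add, zpow_mul, h2, one_zpow, mul_one]
    rcases (by omega : m % 2 = 0 ∨ m % 2 = 1) with h | h
    · left; rw [hm, h, zpow_zero]
    · right; rw [hm, h, zpow_one]
  have hb : b₀ = π a₀ := by
    rcases horder k with h | h
    · exfalso; apply hnab₀
      have : b₀ = a₀ := by rw [← hk, h]; rfl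
      rw [this]
    · rw [← hk, h]
  have hmap : ∀ c x : α, τ.SameCycle c x → τ.SameCycle (π c) (π x) := by
    rintro c x ⟨m, hm⟩
    exact ⟨-m, by rw [← hpt m c, hm]⟩
  refine ⟨a₀, π a₀, by rwa [← hb], fun m => hpt m a₀, ?_, ?_⟩
  · intro m
    rw [hpt m (π a₀), hπ2 a₀]
  · have e : {x : α | τ.SameCycle a₀ x} ≃ {x : α | τ.SameCycle (π a₀) x} :=
      { toFun := fun x => ⟨π x.1, hmap a₀ x.1 x.2⟩
        invFun := fun y => ⟨π y.1, by
          have h := hmap (π a₀) y.1 y.2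
          rwa [hπ2] at h⟩
        left_inv := fun x => Subtype.ext (hπ2 x.1)
        right_inv := fun y => Subtype.ext (hπ2 y.1) }
    exact Nat.card_congr e
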